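/- arXiv:1201.3579 — 3 statements merged into one kernel-verified Lean document; each statement's English description precedes it below -/
import Mathlib

section
/- Let (X_n), (ε_n), (V_n) be real sequences satisfying X_n = θX_{n−1} + ε_n and ε_n = ρε_{n−1} + V_n for all n ≥ 1, with |θ| < 1 and |ρ| < 1. Then for all n ≥ 1, ∑_{k=0}^{n} X_k² ≤ α X_0² + β ε_0² + β ∑_{k=1}^{n} V_k², where α = 1 + (1−|θ|)^{−2} and β = (1−|ρ|)^{−2}(1−|θ|)^{−2}. -/
open Finset

private lemma geom_bound {r : ℝ} (h0 : 0 ≤ r) (h1 : r < 1) (n : ℕ) :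
    ∑ i ∈ Finset.range n, r ^ i ≤ (1 - r)⁻¹ := by
  have := Summable.sum_le_tsum (Finset.range n) (fun i _ => pow_nonneg h0 i)
    (summable_geometric_of_lt_one h0 h1)
  rwa [tsum_geometric_of_lt_one h0 h1] at this

private lemma closed_form (c : ℝ) (u w : ℕ → ℝ) (h0 : w 0 = u 0)
    (h : ∀ n, 1 ≤ n → u n = c * u (n - 1) + w n) :
    ∀ k, u k = ∑ j ∈ Finset.range (k + 1), c ^ (k - j) * w j := by
  intro k
  induction k with
  | zero => simp [h0]
  | succ k ih =>
    have hrec := h (k + 1) (Nat.le_add_left 1 k)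
    simp only [Nat.add_sub_cancel] at hrec
    rw [hrec, ih, Finset.sum_range_succ (fun j => c ^ (k + 1 - j) * w j) (k + 1)]
    have he : ∑ j ∈ Finset.range (k + 1), c ^ (k + 1 - j) * w j
        = ∑ j ∈ Finset.range (k + 1), c * (c ^ (k - j) * w j) := by
      refine Finset.sum_congr rfl fun j hj => ?_
      have hjk : j ≤ k := Nat.lt_succ_iff.mp (Finset.mem_range.mp hj)
      have : k + 1 - j = (k - j) + 1 := by omega
      rw [this, pow_succ']
      ring
    rw [he, ← Finset.mul_sum]
    simp

private lemma key_lemma (c : ℝ) (hc : |c| < 1) (u w : ℕ → ℝ)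
    (h : ∀ n, 1 ≤ n → u n = c * u (n - 1) + w n) (n : ℕ) :
    ∑ k ∈ Finset.range (n + 1), (u k) ^ 2 ≤
      (1 - |c|)⁻¹ ^ 2 * ((u 0) ^ 2 + ∑ k ∈ Finset.Icc 1 n, (w k) ^ 2) := by
  set w' : ℕ → ℝ := fun j => if j = 0 then u 0 else w j with hw'
  have h0 : w' 0 = u 0 := by simp [hw']
  have hC0 : (0:ℝ) < 1 - |c| := by linarith
  have hCinv : (0:ℝ) ≤ (1 - |c|)⁻¹ := inv_nonneg.mpr hC0.le
  have habs : 0 ≤ |c| := abs_nonneg c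
  have hrec' : ∀ m, 1 ≤ m → u m = c * u (m - 1) + w' m := by
    intro m hm
    have : w' m = w m := by simp [hw', Nat.one_le_iff_ne_zero.mp hm]
    rw [this]; exact h m hm
  have hcf := closed_form c u w' h0 hrec'
  -- pointwise bound
  have hpt : ∀ k, (u k) ^ 2 ≤
      (1 - |c|)⁻¹ * ∑ j ∈ Finset.range (k + 1), |c| ^ (k - j) * (w' j) ^ 2 := by
    intro k
    rw [hcf k]
    have hcs := Finset.sum_mul_sq_le_sq_mul_sq (Finset.range (k + 1))
      (fun j => Real.sqrt (|c| ^ (k - j))) (fun j => Real.sqrt (|c| ^ (k - j)) * |w' j|)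
    have h1 : ∀ j ∈ Finset.range (k + 1),
        Real.sqrt (|c| ^ (k - j)) * (Real.sqrt (|c| ^ (k - j)) * |w' j|)
          = |c| ^ (k - j) * |w' j| := by
      intro j _
      rw [← mul_assoc, Real.mul_self_sqrt (pow_nonneg habs _)]
    have h2 : ∀ j ∈ Finset.range (k + 1),
        (Real.sqrt (|c| ^ (k - j))) ^ 2 = |c| ^ (k - j) := by
      intro j _; exact Real.sq_sqrt (pow_nonneg habs _)
    have h3 : ∀ j ∈ Finset.range (k + 1),
        (Real.sqrt (|c| ^ (k - j)) * |w' j|) ^ 2 = |c| ^ (k - j) * (w' j) ^ 2 := by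
      intro j _
      rw [mul_pow, Real.sq_sqrt (pow_nonneg habs _), sq_abs]
    rw [Finset.sum_congr rfl h1, Finset.sum_congr rfl h2, Finset.sum_congr rfl h3] at hcs
    have habs_sum : |∑ j ∈ Finset.range (k + 1), c ^ (k - j) * w' j|
        ≤ ∑ j ∈ Finset.range (k + 1), |c| ^ (k - j) * |w' j| := by
      refine (Finset.abs_sum_le_sum_abs _ _).trans (le_of_eq ?_)
      refine Finset.sum_congr rfl fun j _ => ?_
      rw [abs_mul, abs_pow]
    have hsq : (∑ j ∈ Finset.range (k + 1), c ^ (k - j) * w' j) ^ 2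
        ≤ (∑ j ∈ Finset.range (k + 1), |c| ^ (k - j) * |w' j|) ^ 2 := by
      rw [← sq_abs]
      exact pow_le_pow_left₀ (abs_nonneg _) habs_sum 2
    have hgeom : ∑ j ∈ Finset.range (k + 1), |c| ^ (k - j) ≤ (1 - |c|)⁻¹ := by
      have := Finset.sum_range_reflect (fun i => |c| ^ i) (k + 1)
      simp only [Nat.add_sub_cancel] at this
      rw [this]
      exact geom_bound habs hc (k + 1)
    have hinner : 0 ≤ ∑ j ∈ Finset.range (k + 1), |c| ^ (k - j) * (w' j) ^ 2 :=
      Finset.sum_nonneg fun j _ => mul_nonneg (pow_nonneg habs _) (sq_nonneg _)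
    calc (∑ j ∈ Finset.range (k + 1), c ^ (k - j) * w' j) ^ 2
        ≤ (∑ j ∈ Finset.range (k + 1), |c| ^ (k - j))
            * ∑ j ∈ Finset.range (k + 1), |c| ^ (k - j) * (w' j) ^ 2 := hsq.trans hcs
      _ ≤ (1 - |c|)⁻¹ * ∑ j ∈ Finset.range (k + 1), |c| ^ (k - j) * (w' j) ^ 2 :=
          mul_le_mul_of_nonneg_right hgeom hinner
  -- sum up and swap
  have hswap : ∑ k ∈ Finset.range (n + 1), ∑ j ∈ Finset.range (k + 1),
        |c| ^ (k - j) * (w' j) ^ 2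
      = ∑ j ∈ Finset.range (n + 1), ∑ k ∈ Finset.Icc j n, |c| ^ (k - j) * (w' j) ^ 2 := by
    refine Finset.sum_comm' ?_
    intro k j
    simp only [Finset.mem_range, Finset.mem_Icc]
    omega
  have hcol : ∀ j ∈ Finset.range (n + 1),
      ∑ k ∈ Finset.Icc j n, |c| ^ (k - j) * (w' j) ^ 2 ≤ (1 - |c|)⁻¹ * (w' j) ^ 2 := by
    intro j hj
    rw [← Finset.sum_mul]
    refine mul_le_mul_of_nonneg_right ?_ (sq_nonneg _)
    have : ∑ k ∈ Finset.Icc j n, |c| ^ (k - j) = ∑ i ∈ Finset.range (n + 1 - j), |c| ^ i := by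
      rw [← Finset.Ico_add_one_right_eq_Icc, Finset.sum_Ico_eq_sum_range]
      exact Finset.sum_congr rfl fun i _ => by rw [Nat.add_sub_cancel_left]
    rw [this]
    exact geom_bound habs hc _
  have hsplit : ∑ j ∈ Finset.range (n + 1), (w' j) ^ 2
      = (u 0) ^ 2 + ∑ k ∈ Finset.Icc 1 n, (w k) ^ 2 := by
    rw [Finset.sum_range_succ', ← Finset.Ico_add_one_right_eq_Icc, Finset.sum_Ico_eq_sum_range]
    simp only [Nat.add_sub_cancel, h0]
    rw [add_comm]
    exact congrArg (fun t => (u 0) ^ 2 + t)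
      (Finset.sum_congr rfl fun i _ => by
        rw [show (1:ℕ) + i = i + 1 from Nat.add_comm 1 i]; simp [hw'])
  calc ∑ k ∈ Finset.range (n + 1), (u k) ^ 2
      ≤ ∑ k ∈ Finset.range (n + 1),
          (1 - |c|)⁻¹ * ∑ j ∈ Finset.range (k + 1), |c| ^ (k - j) * (w' j) ^ 2 :=
        Finset.sum_le_sum fun k _ => hpt k
    _ = (1 - |c|)⁻¹ * ∑ j ∈ Finset.range (n + 1), ∑ k ∈ Finset.Icc j n,
          |c| ^ (k - j) * (w' j) ^ 2 := by rw [← Finset.mul_sum, hswap]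
    _ ≤ (1 - |c|)⁻¹ * ∑ j ∈ Finset.range (n + 1), (1 - |c|)⁻¹ * (w' j) ^ 2 :=
        mul_le_mul_of_nonneg_left (Finset.sum_le_sum hcol) hCinv
    _ = (1 - |c|)⁻¹ ^ 2 * ∑ j ∈ Finset.range (n + 1), (w' j) ^ 2 := by
        rw [← Finset.mul_sum]; ring
    _ = (1 - |c|)⁻¹ ^ 2 * ((u 0) ^ 2 + ∑ k ∈ Finset.Icc 1 n, (w k) ^ 2) := by rw [hsplit]

theorem stmt_6 (θ ρ : ℝ) (hθ : |θ| < 1) (hρ : |ρ| < 1)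
    (X ε V : ℕ → ℝ)
    (hX : ∀ n, 1 ≤ n → X n = θ * X (n - 1) + ε n)
    (hε : ∀ n, 1 ≤ n → ε n = ρ * ε (n - 1) + V n) :
    ∀ n, 1 ≤ n →
      ∑ k ∈ Finset.range (n + 1), (X k) ^ 2 ≤
        (1 + (1 - |θ|)⁻¹ ^ 2) * (X 0) ^ 2 +
        (1 - |ρ|)⁻¹ ^ 2 * (1 - |θ|)⁻¹ ^ 2 * (ε 0) ^ 2 +
        (1 - |ρ|)⁻¹ ^ 2 * (1 - |θ|)⁻¹ ^ 2 * ∑ k ∈ Finset.Icc 1 n, (V k) ^ 2 := by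
  intro n hn
  have hCθ : (0:ℝ) ≤ (1 - |θ|)⁻¹ ^ 2 := sq_nonneg _
  have hCρ : (0:ℝ) ≤ (1 - |ρ|)⁻¹ ^ 2 := sq_nonneg _
  have hkeyX := key_lemma θ hθ X ε hX n
  have hkeyε := key_lemma ρ hρ ε V hε n
  -- ∑_{k∈Icc 1 n} ε k ^2 ≤ ∑_{k∈range (n+1)} ε k ^ 2
  have hεsum : ∑ k ∈ Finset.Icc 1 n, (ε k) ^ 2 ≤ ∑ k ∈ Finset.range (n + 1), (ε k) ^ 2 := by
    refine Finset.sum_le_sum_of_subset_of_nonneg ?_ (fun k _ _ => sq_nonneg _)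
    intro k hk
    simp only [Finset.mem_Icc] at hk
    simp only [Finset.mem_range]
    omega
  have h2 : ∑ k ∈ Finset.Icc 1 n, (ε k) ^ 2 ≤
      (1 - |ρ|)⁻¹ ^ 2 * ((ε 0) ^ 2 + ∑ k ∈ Finset.Icc 1 n, (V k) ^ 2) :=
    hεsum.trans hkeyε
  have h3 : ∑ k ∈ Finset.range (n + 1), (X k) ^ 2 ≤
      (1 - |θ|)⁻¹ ^ 2 * ((X 0) ^ 2 +
        (1 - |ρ|)⁻¹ ^ 2 * ((ε 0) ^ 2 + ∑ k ∈ Finset.Icc 1 n, (V k) ^ 2)) := by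
    refine hkeyX.trans (mul_le_mul_of_nonneg_left ?_ hCθ)
    linarith
  refine h3.trans ?_
  have hX0 : (0:ℝ) ≤ (X 0) ^ 2 := sq_nonneg _
  nlinarith [sq_nonneg (ε 0), Finset.sum_nonneg (fun k (_ : k ∈ Finset.Icc 1 n) => sq_nonneg (V k))]
end

section
/- Let (X_n), (ε_n), (V_n) be real sequences with X_n = θX_{n−1} + ε_n, ε_n = ρε_{n−1} + V_n for n ≥ 1, |θ| < 1, |ρ| < 1. Then for any η ≥ 0 and all n ≥ 1, ∑_{k=0}^{n} |X_k|^{2+η} ≤ α|X_0|^{2+η} + β|ε_0|^{2+η} + β ∑_{k=1}^{n} |V_k|^{2+η}, where α = 1 + (1−|θ|)^{−(2+η)} and β = (1−|ρ|)^{−(2+η)}(1−|θ|)^{−(2+η)}. -/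
private lemma key_convex (p : ℝ) (hp : 1 ≤ p) (a u v : ℝ) (ha : 0 ≤ a) (ha1 : a < 1)
    (hu : 0 ≤ u) (hv : 0 ≤ v) :
    (a * u + v) ^ p ≤ a * u ^ p + (1 - a) * ((1 - a)⁻¹) ^ p * v ^ p := by
  have h1a : (0:ℝ) < 1 - a := by linarith
  have h := (convexOn_rpow (p := p) (by linarith)).2
    (Set.mem_Ici.mpr hu) (Set.mem_Ici.mpr (by positivity : (0:ℝ) ≤ (1 - a)⁻¹ * v))
    ha h1a.le (by ring)
  simp only [smul_eq_mul] at h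
  have he : a * u + (1 - a) * ((1 - a)⁻¹ * v) = a * u + v := by
    field_simp
  rw [he] at h
  calc (a * u + v) ^ p ≤ a * u ^ p + (1 - a) * ((1 - a)⁻¹ * v) ^ p := h
    _ = a * u ^ p + (1 - a) * ((1 - a)⁻¹) ^ p * v ^ p := by
        rw [Real.mul_rpow (by positivity) hv]; ring

private lemma sum_bound (p : ℝ) (hp : 1 ≤ p) (c : ℝ) (hc : |c| < 1)
    (x e : ℕ → ℝ) (hrec : ∀ i : ℕ, x (i + 1) = c * x i + e (i + 1)) (n : ℕ) :
    ∑ i ∈ Finset.range (n + 1), |x i| ^ p ≤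
      (1 + ((1 - |c|)⁻¹) ^ p) * |x 0| ^ p +
        ((1 - |c|)⁻¹) ^ p * ∑ i ∈ Finset.range n, |e (i + 1)| ^ p := by
  set a := |c| with hadef
  have ha : 0 ≤ a := abs_nonneg c
  have h1a : (0:ℝ) < 1 - a := by linarith
  set q := (1 - a)⁻¹ with hqdef
  have hq0 : 0 < q := by positivity
  have hq1 : 1 ≤ q := by
    rw [hqdef]
    rw [le_inv_comm₀ one_pos h1a]
    simp; linarith
  have hqp : q ≤ q ^ p := by
    calc q = q ^ (1:ℝ) := (Real.rpow_one q).symm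
      _ ≤ q ^ p := Real.rpow_le_rpow_of_exponent_le hq1 hp
  have hq1a : q * (1 - a) = 1 := inv_mul_cancel₀ h1a.ne'
  set T := ∑ i ∈ Finset.range n, |x (i + 1)| ^ p with hT
  set E := ∑ i ∈ Finset.range n, |e (i + 1)| ^ p with hE
  have hE0 : 0 ≤ E := Finset.sum_nonneg fun i _ => Real.rpow_nonneg (abs_nonneg _) _
  have hstep : ∀ i, |x (i + 1)| ^ p ≤ a * |x i| ^ p + (1 - a) * q ^ p * |e (i + 1)| ^ p := by
    intro i
    have h1 : |x (i + 1)| ≤ a * |x i| + |e (i + 1)| := by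
      rw [hrec i]
      calc |c * x i + e (i + 1)| ≤ |c * x i| + |e (i + 1)| := abs_add_le _ _
        _ = a * |x i| + |e (i + 1)| := by rw [abs_mul]
    have h2 : |x (i + 1)| ^ p ≤ (a * |x i| + |e (i + 1)|) ^ p :=
      Real.rpow_le_rpow (abs_nonneg _) h1 (by linarith)
    exact h2.trans (key_convex p hp a _ _ ha hc (abs_nonneg _) (abs_nonneg _))
  have hsum : T ≤ a * (∑ i ∈ Finset.range n, |x i| ^ p) + (1 - a) * q ^ p * E := by
    calc T ≤ ∑ i ∈ Finset.range n, (a * |x i| ^ p + (1 - a) * q ^ p * |e (i + 1)| ^ p) :=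
        Finset.sum_le_sum fun i _ => hstep i
      _ = _ := by rw [Finset.sum_add_distrib, ← Finset.mul_sum, ← Finset.mul_sum]
  have hsplit : ∑ i ∈ Finset.range (n + 1), |x i| ^ p = T + |x 0| ^ p :=
    Finset.sum_range_succ' _ n
  have hsub : ∑ i ∈ Finset.range n, |x i| ^ p ≤ T + |x 0| ^ p := by
    rw [← hsplit]
    exact Finset.sum_le_sum_of_subset_of_nonneg (Finset.range_subset_range.mpr (Nat.le_succ n))
      fun i _ _ => Real.rpow_nonneg (abs_nonneg _) _
  have h4 : (1 - a) * T ≤ a * |x 0| ^ p + (1 - a) * q ^ p * E := by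
    have h3 : T ≤ a * (T + |x 0| ^ p) + (1 - a) * q ^ p * E := by
      refine hsum.trans ?_
      have := mul_le_mul_of_nonneg_left hsub ha
      linarith
    nlinarith
  have h5 : T ≤ q * a * |x 0| ^ p + q ^ p * E := by
    have h := mul_le_mul_of_nonneg_left h4 hq0.le
    calc T = q * ((1 - a) * T) := by rw [← mul_assoc, hq1a, one_mul]
      _ ≤ q * (a * |x 0| ^ p + (1 - a) * q ^ p * E) := h
      _ = q * a * |x 0| ^ p + (q * (1 - a)) * (q ^ p * E) := by ring
      _ = q * a * |x 0| ^ p + q ^ p * E := by rw [hq1a, one_mul]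
  have hx0 : 0 ≤ |x 0| ^ p := Real.rpow_nonneg (abs_nonneg _) _
  have hqa : q * a ≤ q ^ p := by
    have : q * a ≤ q * 1 := mul_le_mul_of_nonneg_left hc.le hq0.le
    rw [mul_one] at this
    exact this.trans hqp
  rw [hsplit]
  have : q * a * |x 0| ^ p ≤ q ^ p * |x 0| ^ p := mul_le_mul_of_nonneg_right hqa hx0
  nlinarith

theorem stmt_7 (θ ρ : ℝ) (hθ : |θ| < 1) (hρ : |ρ| < 1) (η : ℝ) (hη : 0 ≤ η)
    (X ε V : ℕ → ℝ)
    (hX : ∀ n, 1 ≤ n → X n = θ * X (n - 1) + ε n)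
    (hε : ∀ n, 1 ≤ n → ε n = ρ * ε (n - 1) + V n) :
    ∀ n, 1 ≤ n →
      ∑ k ∈ Finset.range (n + 1), |X k| ^ (2 + η) ≤
        (1 + (1 - |θ|)⁻¹ ^ (2 + η)) * |X 0| ^ (2 + η) +
        (1 - |ρ|)⁻¹ ^ (2 + η) * (1 - |θ|)⁻¹ ^ (2 + η) * |ε 0| ^ (2 + η) +
        (1 - |ρ|)⁻¹ ^ (2 + η) * (1 - |θ|)⁻¹ ^ (2 + η) *
          ∑ k ∈ Finset.Icc 1 n, |V k| ^ (2 + η) := by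
  intro n hn
  set p : ℝ := 2 + η with hpdef
  have hp : 1 ≤ p := by simp [hpdef]; linarith
  have hXrec : ∀ i : ℕ, X (i + 1) = θ * X i + ε (i + 1) := by
    intro i
    have := hX (i + 1) (by omega)
    simpa using this
  have hεrec : ∀ i : ℕ, ε (i + 1) = ρ * ε i + V (i + 1) := by
    intro i
    have := hε (i + 1) (by omega)
    simpa using this
  have hIcc : ∑ k ∈ Finset.Icc 1 n, |V k| ^ p = ∑ i ∈ Finset.range n, |V (i + 1)| ^ p := by
    rw [← Finset.Ico_add_one_right_eq_Icc, Finset.sum_Ico_eq_sum_range]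
    simp [add_comm]
  have hBX := sum_bound p hp θ hθ X ε hXrec n
  have hBε := sum_bound p hp ρ hρ ε V hεrec n
  set q := (1 - |θ|)⁻¹ with hqdef
  set r := (1 - |ρ|)⁻¹ with hrdef
  have hqp0 : 0 ≤ q ^ p := Real.rpow_nonneg (inv_nonneg.mpr (by linarith)) _
  -- bound on T_ε
  have hTε : ∑ i ∈ Finset.range n, |ε (i + 1)| ^ p ≤
      r ^ p * |ε 0| ^ p + r ^ p * ∑ i ∈ Finset.range n, |V (i + 1)| ^ p := by
    have hsplit : ∑ i ∈ Finset.range (n + 1), |ε i| ^ p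
        = (∑ i ∈ Finset.range n, |ε (i + 1)| ^ p) + |ε 0| ^ p :=
      Finset.sum_range_succ' _ n
    rw [hsplit] at hBε
    linarith
  have hmul := mul_le_mul_of_nonneg_left hTε hqp0
  rw [hIcc]
  nlinarith [hBX, hmul]
end

section
/- Let θ, ρ ∈ ℝ with |θ| < 1, |ρ| < 1, θ ≠ −ρ, θ* = (θ+ρ)/(1+θρ), ℓ > 0, and let A = (ℓ(1+θρ)(1−(θ*)²))^{−1} · [[1−(θ*)², 0], [θρ+(θ*)², −(θ+ρ)]] and Λ = ℓ[[1, θ*], [θ*, 1]]. Then with σ² > 0 and ℓ = σ²(1+θρ)/((1−θ²)(1−θρ)(1−ρ²)), the matrix σ² A Λ A′ equals Γ = [[σ²_θ, θρσ²_θ], [θρσ²_θ, σ²_ρ]], where σ²_θ = (1−θ²)(1−θρ)(1−ρ²)/(1+θρ)³ and σ²_ρ = (1−θρ)/(1+θρ)³·((θ+ρ)²(1+θρ)² + (θρ)²(1−θ²)(1−ρ²)). -/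
set_option maxHeartbeats 2000000


open Matrix in
theorem stmt_17 (θ ρ σ2 : ℝ) (hθ : |θ| < 1) (hρ : |ρ| < 1) (hne : θ ≠ -ρ)
    (hσ : 0 < σ2) :
    let θs : ℝ := (θ + ρ) / (1 + θ * ρ)
    let ℓ : ℝ := σ2 * (1 + θ * ρ) / ((1 - θ ^ 2) * (1 - θ * ρ) * (1 - ρ ^ 2))
    let A : Matrix (Fin 2) (Fin 2) ℝ := (ℓ * (1 + θ * ρ) * (1 - θs ^ 2))⁻¹ •
      !![1 - θs ^ 2, 0; θ * ρ + θs ^ 2, -(θ + ρ)]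
    let Λ : Matrix (Fin 2) (Fin 2) ℝ := ℓ • !![1, θs; θs, 1]
    let σθ2 : ℝ := (1 - θ ^ 2) * (1 - θ * ρ) * (1 - ρ ^ 2) / (1 + θ * ρ) ^ 3
    let σρ2 : ℝ := (1 - θ * ρ) / (1 + θ * ρ) ^ 3 *
      ((θ + ρ) ^ 2 * (1 + θ * ρ) ^ 2 + (θ * ρ) ^ 2 * (1 - θ ^ 2) * (1 - ρ ^ 2))
    σ2 • (A * Λ * Aᵀ) = !![σθ2, θ * ρ * σθ2; θ * ρ * σθ2, σρ2] := by
  intro θs ℓ A Λ σθ2 σρ2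
  have habsθ := abs_lt.mp hθ
  have habsρ := abs_lt.mp hρ
  have h1 : (0:ℝ) < 1 - θ ^ 2 := by nlinarith [habsθ.1, habsθ.2]
  have h2 : (0:ℝ) < 1 - ρ ^ 2 := by nlinarith [habsρ.1, habsρ.2]
  have h3 : (0:ℝ) < 1 + θ * ρ := by nlinarith
  have h4 : (0:ℝ) < 1 - θ * ρ := by nlinarith
  have hc : (ℓ * (1 + θ * ρ) * (1 - θs ^ 2))⁻¹ = (1 - θ * ρ) / σ2 := by
    have : ℓ * (1 + θ * ρ) * (1 - θs ^ 2) = σ2 / (1 - θ * ρ) := by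
      simp only [ℓ, θs]
      field_simp
      ring
    rw [this, inv_div]
  have hA : A = ((1 - θ * ρ) / σ2) • !![1 - θs ^ 2, 0; θ * ρ + θs ^ 2, -(θ + ρ)] := by
    simp only [A, hc]
  have key : σ2 • (A * Λ * Aᵀ) =
      (σ2 * ((1 - θ * ρ) / σ2) * ℓ * ((1 - θ * ρ) / σ2)) •
        (!![1 - θs ^ 2, 0; θ * ρ + θs ^ 2, -(θ + ρ)] * !![1, θs; θs, 1] *
          !![1 - θs ^ 2, 0; θ * ρ + θs ^ 2, -(θ + ρ)]ᵀ) := by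
    rw [hA]
    simp only [Λ, Matrix.transpose_smul, Matrix.smul_mul, Matrix.mul_smul, smul_smul]
    ring_nf
  have hk : σ2 * ((1 - θ * ρ) / σ2) * ℓ * ((1 - θ * ρ) / σ2) =
      (1 - θ * ρ) * (1 + θ * ρ) / ((1 - θ ^ 2) * (1 - ρ ^ 2)) := by
    simp only [ℓ]
    field_simp
  rw [key, hk]
  ext i j
  fin_cases i <;> fin_cases j <;>
    simp only [θs, σθ2, σρ2, Matrix.smul_apply, Matrix.mul_apply,
      Matrix.transpose_apply, Fin.sum_univ_two, smul_eq_mul,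
      Matrix.cons_val', Matrix.cons_val_zero, Matrix.cons_val_one, Matrix.head_cons,
      Matrix.empty_val', Matrix.cons_val_fin_one, Matrix.head_fin_const, Fin.zero_eta, Fin.mk_one, Fin.isValue, Matrix.of_apply, Matrix.cons_val] <;>
  · field_simp
    ring
end
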